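/- Let H and K be infinite dimensional complex Hilbert spaces, let n ≥ 2, and let φ : B(H) → B(K) be a bijective n-homomorphism (a bijective linear map with φ(T₁⋯Tₙ) = φ(T₁)⋯φ(Tₙ) for all T₁,…,Tₙ ∈ B(H)). Then there exist a complex number α and an invertible bounded linear operator S from K onto H such that φ(T) = α·S⁻¹TS for all T ∈ B(H). -/

import Mathlib

open ContinuousLinearMap Filter Topology

section Aux

variable {E : Type*} [NormedAddCommGroup E] [InnerProductSpace ℂ E]

/-- A continuous functional taking the value `1` at a given nonzero vector. -/
lemma exists_dual_one (x : E) (hx : x ≠ 0) : ∃ f : E →L[ℂ] ℂ, f x = 1 := by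
  refine ⟨((‖x‖ : ℂ)^2)⁻¹ • innerSL ℂ x, ?_⟩
  have : (‖x‖ : ℂ) ^ 2 ≠ 0 := by
    exact_mod_cast pow_ne_zero 2 ((norm_ne_zero_iff).mpr hx)
  simp [inner_self_eq_norm_sq_to_K]
  field_simp
  exact div_self (by exact_mod_cast (norm_ne_zero_iff).mpr hx)

/-- Structure of a "minimal" idempotent in `B(E)`: it is a rank-one operator. -/
lemma rank_one_of_minimal (p : E →L[ℂ] E) (hp2 : p * p = p) (hp0 : p ≠ 0)
    (hmin : ∀ T : E →L[ℂ] E, ∃ c : ℂ, p * T * p = c • p) :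
    ∃ (x : E) (f : E →L[ℂ] ℂ), f x = 1 ∧ p = f.smulRight x := by
  have hu : ∃ u : E, p u ≠ 0 := by
    by_contra hc
    push_neg at hc
    exact hp0 (ContinuousLinearMap.ext fun u => by simp [hc u])
  obtain ⟨u₀, hu₀⟩ := hu
  set x := p u₀ with hxdef
  have hpx : p x = x := by
    have := congrArg (fun T : E →L[ℂ] E => T u₀) hp2
    simpa [mul_apply] using this
  obtain ⟨g, hg⟩ := exists_dual_one x hu₀
  have key : ∀ u : E, p u = g (p u) • x := by
    intro u
    obtain ⟨c, hc⟩ := hmin (g.smulRight (p u))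
    have h1 : p (p u) = c • x := by
      have := congrArg (fun T : E →L[ℂ] E => T x) hc
      simpa [mul_apply, smulRight_apply, hpx, hg] using this
    have h2 : p u = c • x := by
      have := congrArg (fun T : E →L[ℂ] E => T u) hp2
      simp [mul_apply] at this
      rw [this] at h1; exact h1
    rw [h2]
    simp [hg, smul_smul]
  refine ⟨x, g.comp p, by simp [hpx, hg], ?_⟩
  ext u
  simpa [smulRight_apply] using key u

/-- An operator commuting with everything is a scalar. -/
lemma central_scalar [Nontrivial E] (e : E →L[ℂ] E)
    (h : ∀ W : E →L[ℂ] E, e * W = W * e) : ∃ μ : ℂ, e = μ • 1 := by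
  have key : ∀ v : E, v ≠ 0 → ∃ c : ℂ, e v = c • v := by
    intro v hv
    obtain ⟨g, hg⟩ := exists_dual_one v hv
    have := congrArg (fun T : E →L[ℂ] E => T v) (h (g.smulRight v))
    simp [mul_apply, smulRight_apply, hg] at this
    exact ⟨g (e v), this⟩
  obtain ⟨k₀, hk₀⟩ := exists_ne (0 : E)
  obtain ⟨μ, hμ⟩ := key k₀ hk₀
  have main : ∀ v : E, v ≠ 0 → e v = μ • v := by
    intro v hv
    obtain ⟨c, hc⟩ := key v hv
    by_cases hdep : ∃ t : ℂ, v = t • k₀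
    · obtain ⟨t, rfl⟩ := hdep
      have ht : t ≠ 0 := by rintro rfl; simp at hv
      have h1 : e (t • k₀) = (t * μ) • k₀ := by rw [map_smul, hμ, smul_smul]
      rw [hc, smul_smul] at h1
      have h3 : c * t = t * μ := smul_left_injective ℂ hk₀ h1
      have h4 : c = μ := mul_right_cancel₀ ht (by rw [h3, mul_comm])
      rw [hc, h4]
    · push_neg at hdep
      have hsum : v + k₀ ≠ 0 := by
        intro hz
        exact (hdep (-1)) (by rw [neg_one_smul, eq_neg_iff_add_eq_zero]; exact hz)
      obtain ⟨d, hd⟩ := key (v + k₀) hsum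
      have hexp : c • v + μ • k₀ = d • v + d • k₀ := by
        rw [← hc, ← hμ, ← map_add, hd, smul_add]
      have hcd : c = d := by
        by_contra hne
        apply hdep ((c - d)⁻¹ * (d - μ))
        have : (c - d) • v = (d - μ) • k₀ := by
          have := sub_eq_zero.mpr hexp
          rw [add_sub_add_comm, ← sub_smul, ← sub_smul] at this
          have h2 : (c - d) • v = -((μ - d) • k₀) := by
            rw [eq_neg_iff_add_eq_zero]; exact this
          rw [h2, ← neg_smul, neg_sub]
        rw [mul_smul, ← this, smul_smul, inv_mul_cancel₀ (sub_ne_zero.mpr hne), one_smul]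
      have hdμ : d = μ := by
        by_contra hne
        have : (c - d) • v = (d - μ) • k₀ := by
          have := sub_eq_zero.mpr hexp
          rw [add_sub_add_comm, ← sub_smul, ← sub_smul] at this
          have h2 : (c - d) • v = -((μ - d) • k₀) := by
            rw [eq_neg_iff_add_eq_zero]; exact this
          rw [h2, ← neg_smul, neg_sub]
        rw [hcd, sub_self, zero_smul] at this
        exact hk₀ ((smul_eq_zero.mp this.symm).resolve_left (sub_ne_zero.mpr hne))
      rw [hc, hcd, hdμ]
  refine ⟨μ, ?_⟩
  ext v
  by_cases hv : v = 0
  · simp [hv]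
  · simpa using main v hv

end Aux

/-- A bijective multiplicative linear map `B(H) → B(K)` is spatial. -/
lemma spatial_of_mul {H K : Type*}
    [NormedAddCommGroup H] [InnerProductSpace ℂ H] [CompleteSpace H] [Nontrivial H]
    [NormedAddCommGroup K] [InnerProductSpace ℂ K] [CompleteSpace K]
    (ψ : (H →L[ℂ] H) →ₗ[ℂ] (K →L[ℂ] K)) (hbij : Function.Bijective ψ)
    (hmul : ∀ a b : H →L[ℂ] H, ψ (a * b) = ψ a * ψ b) :
    ∃ S : K ≃L[ℂ] H, ∀ T : H →L[ℂ] H,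
      ψ T = ((S.symm : H →L[ℂ] K).comp (T.comp (S : K →L[ℂ] H))) := by
  obtain ⟨x₀, hx₀⟩ := exists_ne (0 : H)
  obtain ⟨f₀, hf₀⟩ := exists_dual_one x₀ hx₀
  set p₀ : H →L[ℂ] H := f₀.smulRight x₀ with hp₀def
  have hp₀app : ∀ u, p₀ u = f₀ u • x₀ := fun u => rfl
  have hp₀x : p₀ x₀ = x₀ := by rw [hp₀app, hf₀, one_smul]
  have hp₀2 : p₀ * p₀ = p₀ := by
    ext u; simp [mul_apply, hp₀app, hf₀, smul_smul]
  have hp₀min : ∀ T : H →L[ℂ] H, p₀ * T * p₀ = f₀ (T x₀) • p₀ := by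
    intro T; ext u
    simp [mul_apply, hp₀app, smul_smul, mul_comm]
  -- the image idempotent
  set q : K →L[ℂ] K := ψ p₀ with hqdef
  have hq2 : q * q = q := by rw [hqdef, ← hmul, hp₀2]
  have hq0 : q ≠ 0 := by
    intro hc
    have hz : ψ p₀ = ψ 0 := by rw [map_zero]; exact hc
    have : p₀ = 0 := hbij.injective hz
    exact hx₀ (by rw [← hp₀x, this]; rfl)
  have hqmin : ∀ W : K →L[ℂ] K, ∃ c : ℂ, q * W * q = c • q := by
    intro W
    obtain ⟨T, rfl⟩ := hbij.surjective W
    exact ⟨f₀ (T x₀), by rw [hqdef, ← hmul, ← hmul, hp₀min, map_smul]⟩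
  obtain ⟨y₀, g₀, hg₀, hqrank⟩ := rank_one_of_minimal q hq2 hq0 hqmin
  have hy₀ : y₀ ≠ 0 := by rintro rfl; simp at hg₀
  have hqy₀ : q y₀ = y₀ := by rw [hqrank]; simp [smulRight_apply, hg₀]
  -- the intertwining map
  set U : H →ₗ[ℂ] K :=
    { toFun := fun h => ψ (f₀.smulRight h) y₀
      map_add' := by
        intro a b
        have : f₀.smulRight (a + b) = f₀.smulRight a + f₀.smulRight b := by
          ext u; simp [smulRight_apply, smul_add]
        show ψ (f₀.smulRight (a + b)) y₀ = ψ (f₀.smulRight a) y₀ + ψ (f₀.smulRight b) y₀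
        rw [this, map_add]; rfl
      map_smul' := by
        intro c a
        have : f₀.smulRight (c • a) = c • f₀.smulRight a := by
          ext u; simp [smulRight_apply, smul_smul, mul_comm]
        show ψ (f₀.smulRight (c • a)) y₀ = c • ψ (f₀.smulRight a) y₀
        rw [this, map_smul]; rfl } with hUdef
  have hUapp : ∀ h, U h = ψ (f₀.smulRight h) y₀ := fun h => rfl
  have hint : ∀ (T : H →L[ℂ] H) (h : H), U (T h) = ψ T (U h) := by
    intro T h
    have h1 : f₀.smulRight (T h) = T * (f₀.smulRight h) := by
      ext u; simp [mul_apply, smulRight_apply]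
    rw [hUapp, hUapp, h1, hmul, ContinuousLinearMap.mul_apply]
  have hUx₀ : U x₀ = y₀ := by rw [hUapp, ← hp₀def, ← hqdef, hqy₀]
  -- injectivity
  have hinj : Function.Injective U := by
    rw [injective_iff_map_eq_zero]
    intro h hh
    rw [hUapp] at hh
    have h1 : ψ (f₀.smulRight h) * q = 0 := by
      ext u
      rw [hqrank]
      simp [mul_apply, smulRight_apply, map_smul, hh]
    rw [hqdef, ← hmul] at h1
    have h2 : (f₀.smulRight h) * p₀ = f₀.smulRight h := by
      ext u; simp [mul_apply, smulRight_apply, hp₀app, hf₀, smul_smul]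
    rw [h2] at h1
    have h3 : f₀.smulRight h = 0 := hbij.injective (by rw [h1, map_zero])
    have := congrArg (fun W : H →L[ℂ] H => W x₀) h3
    simpa [smulRight_apply, hf₀] using this
  -- surjectivity
  have hsurj : Function.Surjective U := by
    intro k
    obtain ⟨g, hg⟩ := exists_dual_one y₀ hy₀
    obtain ⟨T, hT⟩ := hbij.surjective (g.smulRight k)
    refine ⟨T x₀, ?_⟩
    have h1 : T * p₀ = f₀.smulRight (T x₀) := by
      ext u; simp [mul_apply, hp₀app, smulRight_apply, map_smul]
    have : ψ (T * p₀) y₀ = k := by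
      rw [hmul, hT, ← hqdef, ContinuousLinearMap.mul_apply, hqy₀, smulRight_apply, hg, one_smul]
    rw [hUapp, ← h1, this]
  -- continuity via the closed graph theorem
  have hcont : Continuous U := by
    apply U.continuous_of_seq_closed_graph
    intro u x y hux huy
    set v : ℕ → H := fun m => u m - x with hvdef
    have hv0 : Tendsto v atTop (𝓝 0) := by
      simpa [hvdef] using hux.sub (tendsto_const_nhds (x := x))
    have hUv : Tendsto (fun m => U (v m)) atTop (𝓝 (y - U x)) := by
      have : (fun m => U (v m)) = fun m => U (u m) - U x := by
        funext m; rw [hvdef]; simp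
      rw [this]
      exact huy.sub (tendsto_const_nhds (x := U x))
    by_contra hne
    have hk : y - U x ≠ 0 := sub_ne_zero.mpr (Ne.symm (fun h => hne h.symm))
    set k := y - U x
    obtain ⟨g, hg⟩ := exists_dual_one k hk
    set q' : K →L[ℂ] K := g.smulRight k with hq'def
    have hq'2 : q' * q' = q' := by
      ext u'; simp [hq'def, mul_apply, smulRight_apply, hg, smul_smul]
    have hq'0 : q' ≠ 0 := by
      intro hc
      have := congrArg (fun W : K →L[ℂ] K => W k) hc
      simp [hq'def, smulRight_apply, hg] at this
      exact hk this
    obtain ⟨p', hp'⟩ := hbij.surjective q'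
    have hp'2 : p' * p' = p' := hbij.injective (by rw [hmul, hp', hq'2])
    have hp'0 : p' ≠ 0 := by rintro rfl; rw [map_zero] at hp'; exact hq'0 hp'.symm
    have hp'min : ∀ T : H →L[ℂ] H, ∃ c : ℂ, p' * T * p' = c • p' := by
      intro T
      refine ⟨g (ψ T k), hbij.injective ?_⟩
      rw [hmul, hmul, hp', map_smul, hp']
      ext u'; simp [hq'def, mul_apply, smulRight_apply, map_smul, hg, smul_smul, mul_comm]
    obtain ⟨x', f', hf', hp'rank⟩ := rank_one_of_minimal p' hp'2 hp'0 hp'min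
    have key : ∀ m, q' (U (v m)) = f' (v m) • U x' := by
      intro m
      rw [← hp', ← hint, hp'rank]
      simp [smulRight_apply, map_smul]
    have lim1 : Tendsto (fun m => q' (U (v m))) atTop (𝓝 0) := by
      rw [funext key]
      have : Tendsto (fun m => f' (v m)) atTop (𝓝 0) := by
        simpa [Function.comp_def] using (f'.continuous.tendsto 0).comp hv0
      simpa using this.smul_const (U x')
    have lim2 : Tendsto (fun m => q' (U (v m))) atTop (𝓝 k) := by
      have := (q'.continuous.tendsto k).comp hUv
      simpa [hg, hq'def, smulRight_apply, Function.comp_def] using this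
    exact hk (tendsto_nhds_unique lim2 lim1)
  -- build the equivalence
  set Ue : H ≃L[ℂ] K :=
    (LinearEquiv.ofBijective U ⟨hinj, hsurj⟩).toContinuousLinearEquivOfContinuous hcont
    with hUedef
  refine ⟨Ue.symm, fun T => ?_⟩
  have hUe : ∀ h : H, Ue h = U h := fun h => rfl
  ext kk
  rw [ContinuousLinearEquiv.symm_symm]
  calc ψ T kk = ψ T (Ue (Ue.symm kk)) := by rw [Ue.apply_symm_apply]
    _ = ψ T (U (Ue.symm kk)) := by rw [hUe]
    _ = U (T (Ue.symm kk)) := (hint _ _).symm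
    _ = Ue (T (Ue.symm kk)) := (hUe _).symm
    _ = ((Ue : H →L[ℂ] K).comp (T.comp (Ue.symm : K →L[ℂ] H))) kk := rfl

section Lists
variable {M : Type*} [Monoid M]

lemma foldl_replicate_one' (a : M) (m : ℕ) :
    (List.replicate m (1 : M)).foldl (· * ·) a = a := by
  induction m with
  | zero => rfl
  | succ m ih => rw [List.replicate_succ, List.foldl_cons, mul_one, ih]

lemma foldl_replicate_pow' (w c : M) (m : ℕ) :
    (List.replicate m c).foldl (· * ·) w = w * c ^ m := by
  induction m generalizing w with
  | zero => simp
  | succ m ih =>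
    rw [List.replicate_succ, List.foldl_cons, ih, mul_assoc, ← pow_succ']

end Lists


/-- `φ` is an `n`-homomorphism: `φ (a₁ ⋯ aₙ) = φ a₁ ⋯ φ aₙ` for all `a₁, …, aₙ`
(encoded via a head element together with a list). -/
def IsNHom {A B : Type*} [NonUnitalNonAssocSemiring A] [NonUnitalNonAssocSemiring B]
    [Module ℂ A] [Module ℂ B] (n : ℕ) (φ : A →ₗ[ℂ] B) : Prop :=
  ∀ (a : A) (l : List A), l.length + 1 = n →
    φ (l.foldl (· * ·) a) = (l.map φ).foldl (· * ·) (φ a)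

/-- If `H` and `K` are infinite-dimensional complex Hilbert spaces and `φ : B(H) → B(K)` is a
bijective `n`-homomorphism, then there are `α : ℂ` and an invertible bounded operator
`S : K → H` such that `φ T = α • S⁻¹ ∘ T ∘ S` for all `T ∈ B(H)`. -/
theorem stmt13 {H K : Type*}
    [NormedAddCommGroup H] [InnerProductSpace ℂ H] [CompleteSpace H]
    [NormedAddCommGroup K] [InnerProductSpace ℂ K] [CompleteSpace K]
    (hH : ¬ FiniteDimensional ℂ H) (hK : ¬ FiniteDimensional ℂ K)
    (n : ℕ) (hn : 2 ≤ n) (φ : (H →L[ℂ] H) →ₗ[ℂ] (K →L[ℂ] K))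
    (hbij : Function.Bijective φ) (hφ : IsNHom n φ) :
    ∃ (α : ℂ) (S : K ≃L[ℂ] H),
      ∀ T : H →L[ℂ] H,
        φ T = α • ((S.symm : H →L[ℂ] K).comp (T.comp (S : K →L[ℂ] H))) := by
  haveI : Nontrivial H := by
    by_contra hc
    rw [not_nontrivial_iff_subsingleton] at hc
    exact hH (Module.Finite.of_basis (Module.Basis.empty _ : Module.Basis Empty ℂ H))
  haveI : Nontrivial K := by
    by_contra hc
    rw [not_nontrivial_iff_subsingleton] at hc
    exact hK (Module.Finite.of_basis (Module.Basis.empty _ : Module.Basis Empty ℂ K))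
  set m := n - 2 with hmdef
  set e : K →L[ℂ] K := φ 1 with hedef
  -- identity 2 : φ a = e ^ (n-1) * φ a
  have id2 : ∀ a : H →L[ℂ] H, φ a = e ^ (m + 1) * φ a := by
    intro a
    have h := hφ 1 (List.replicate m 1 ++ [a])
      (by simp only [List.length_append, List.length_replicate, List.length_cons,
            List.length_nil]; omega)
    rw [List.foldl_append, foldl_replicate_one', List.map_append, List.map_replicate,
      List.foldl_append, foldl_replicate_pow'] at h
    simpa [pow_succ'] using h
  -- identity 3 : φ a = e * φ a * e ^ m
  have id3 : ∀ a : H →L[ℂ] H, φ a = e * φ a * e ^ m := by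
    intro a
    have h := hφ 1 (a :: List.replicate m 1)
      (by simp only [List.length_cons, List.length_replicate]; omega)
    rw [List.foldl_cons, foldl_replicate_one', List.map_cons, List.map_replicate,
      List.foldl_cons, foldl_replicate_pow'] at h
    simpa using h
  -- identity 4 : φ (a * b) = φ a * φ b * e ^ m
  have id4 : ∀ a b : H →L[ℂ] H, φ (a * b) = φ a * φ b * e ^ m := by
    intro a b
    have h := hφ a (b :: List.replicate m 1)
      (by simp only [List.length_cons, List.length_replicate]; omega)
    rw [List.foldl_cons, foldl_replicate_one', List.map_cons, List.map_replicate,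
      List.foldl_cons, foldl_replicate_pow'] at h
    exact h
  -- e ^ (n-1) = 1
  have hpow : e ^ (m + 1) = 1 := by
    obtain ⟨a₁, ha₁⟩ := hbij.surjective 1
    have := id2 a₁
    rw [ha₁, mul_one] at this
    exact this.symm
  -- e is central
  have hcentral : ∀ W : K →L[ℂ] K, e * W = W * e := by
    intro W
    obtain ⟨a, rfl⟩ := hbij.surjective W
    calc e * φ a = e * φ a * 1 := by rw [mul_one]
      _ = e * φ a * e ^ (m + 1) := by rw [hpow]
      _ = (e * φ a * e ^ m) * e := by rw [pow_succ, ← mul_assoc]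
      _ = φ a * e := by rw [← id3]
  obtain ⟨μ, hμ⟩ := central_scalar e hcentral
  -- μ ^ (m+1) = 1 and μ ≠ 0
  have hμpow : μ ^ (m + 1) = 1 := by
    have h1 : (μ ^ (m + 1)) • (1 : K →L[ℂ] K) = 1 := by
      have h0 : (μ • (1 : K →L[ℂ] K)) ^ (m + 1) = (μ ^ (m + 1)) • 1 := by
        rw [smul_pow, one_pow]
      rw [← h0, ← hμ, hpow]
    obtain ⟨k₀, hk₀⟩ := exists_ne (0 : K)
    have := congrArg (fun W : K →L[ℂ] K => W k₀) h1
    simp only [smul_apply, ContinuousLinearMap.one_apply] at this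
    by_contra hne
    have h2 : (μ ^ (m + 1) - 1) • k₀ = 0 := by
      rw [sub_smul, one_smul, this, sub_self]
    exact hk₀ ((smul_eq_zero.mp h2).resolve_left (sub_ne_zero.mpr hne))
  have hμ0 : μ ≠ 0 := by
    rintro rfl
    rw [zero_pow (Nat.succ_ne_zero m)] at hμpow
    exact zero_ne_one hμpow
  have hc0 : (μ ^ m : ℂ) ≠ 0 := pow_ne_zero m hμ0
  -- the normalized map ψ := μ^m • φ
  set ψ : (H →L[ℂ] H) →ₗ[ℂ] (K →L[ℂ] K) := (μ ^ m) • φ with hψdef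
  have hψapp : ∀ a, ψ a = (μ ^ m) • φ a := fun a => rfl
  have hψbij : Function.Bijective ψ := by
    constructor
    · intro a b hab
      rw [hψapp, hψapp] at hab
      apply hbij.injective
      have := congrArg (fun W : K →L[ℂ] K => (μ ^ m)⁻¹ • W) hab
      simpa [smul_smul, inv_mul_cancel₀ hc0] using this
    · intro W
      obtain ⟨a, ha⟩ := hbij.surjective ((μ ^ m)⁻¹ • W)
      exact ⟨a, by rw [hψapp, ha, smul_smul, mul_inv_cancel₀ hc0, one_smul]⟩
  have hem : e ^ m = (μ ^ m) • 1 := by rw [hμ, smul_pow, one_pow]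
  have hψmul : ∀ a b : H →L[ℂ] H, ψ (a * b) = ψ a * ψ b := by
    intro a b
    have hrhs : (μ ^ m • φ a) * (μ ^ m • φ b) = (μ ^ m * μ ^ m) • (φ a * φ b) := by
      rw [smul_mul_assoc, mul_smul_comm, smul_smul]
    rw [hψapp, hψapp, hψapp, id4, hem, hrhs, mul_smul_comm, mul_one, smul_smul]
  obtain ⟨S, hS⟩ := spatial_of_mul ψ hψbij hψmul
  refine ⟨(μ ^ m)⁻¹, S, fun T => ?_⟩
  rw [← hS T, hψapp, smul_smul, inv_mul_cancel₀ hc0, one_smul]
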